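/- Let φ : Fans_d → G be a fan valuation. Then for every fan N ∈ Fans_d, φ(N) = Σ_{C ∈ N} φ({C}), the sum of the values of φ on the single-cone fans formed by the cones of N. -/

import Mathlib

open scoped Pointwise
open MeasureTheory RealInnerProductSpace

noncomputable section

/-- Euclidean space `ℝ^d`. -/
abbrev Ed (d : ℕ) : Type := EuclideanSpace ℝ (Fin d)

/-- A polyhedral cone in `ℝ^d`: a (nonempty) finite intersection of closed linear
halfspaces; it automatically contains the origin. -/
def IsPolyCone (d : ℕ) (C : Set (Ed d)) : Prop :=
  ∃ s : Finset (Ed d), C = {x | ∀ c ∈ s, ⟪c, x⟫ ≤ 0}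

/-- A face of a cone `C`: the intersection of `C` with a supporting linear hyperplane
(`C` itself being a face, for `c = 0`). -/
def IsFaceOf (d : ℕ) (C F : Set (Ed d)) : Prop :=
  ∃ c : Ed d, (∀ x ∈ C, ⟪c, x⟫ ≤ 0) ∧ F = {x ∈ C | ⟪c, x⟫ = 0}

/-- Dimension of a subset of `ℝ^d` (dimension of its linear span). -/
def setDim (d : ℕ) (S : Set (Ed d)) : ℕ :=
  Module.finrank ℝ (Submodule.span ℝ S)

/-- Dimension of the lineality space of a cone `C`, i.e. of the maximal linear
subspace `C ∩ (-C)` contained in `C`. -/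
def linealDim (d : ℕ) (C : Set (Ed d)) : ℕ :=
  setDim d (C ∩ (-C))

/-- A fan: a finite collection of polyhedral cones, pairwise meeting in common faces,
and all having the same linear span. -/
def IsFan (d : ℕ) (N : Set (Set (Ed d))) : Prop :=
  N.Finite ∧ (∀ C ∈ N, IsPolyCone d C) ∧
    (∀ C ∈ N, ∀ C' ∈ N, IsFaceOf d C (C ∩ C') ∧ IsFaceOf d C' (C ∩ C')) ∧
    (∀ C ∈ N, ∀ C' ∈ N, Submodule.span ℝ C = Submodule.span ℝ C')

/-- The restriction `N ∩ S` of a fan to a set `S`. -/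
def fanInter (d : ℕ) (N : Set (Set (Ed d))) (S : Set (Ed d)) : Set (Set (Ed d)) :=
  {D | ∃ C ∈ N, (intrinsicInterior ℝ C ∩ S).Nonempty ∧ D = C ∩ S}

/-- A fan valuation: `φ ∅ = 0` and `φ(N) = φ(N ∩ H^≤) + φ(N ∩ H^≥) - φ(N ∩ H)`
for every fan `N` and every linear hyperplane `H` of `lin N` (encoded by a nonzero
normal vector `c ∈ lin N`). -/
def IsFanValuation (d : ℕ) {G : Type*} [AddCommGroup G] (φ : Set (Set (Ed d)) → G) : Prop :=
  φ ∅ = 0 ∧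
    ∀ N : Set (Set (Ed d)), IsFan d N →
      ∀ c : Ed d, c ≠ 0 → (∀ C ∈ N, c ∈ Submodule.span ℝ C) →
        φ N = φ (fanInter d N {x | ⟪c, x⟫ ≤ 0}) + φ (fanInter d N {x | 0 ≤ ⟪c, x⟫})
              - φ (fanInter d N {x | ⟪c, x⟫ = 0})

/-- A rotation of `ℝ^d`: a linear isometry of determinant `1`. -/
def IsRotation (d : ℕ) (g : Ed d ≃ₗᵢ[ℝ] Ed d) : Prop :=
  LinearMap.det (g.toLinearEquiv : Ed d →ₗ[ℝ] Ed d) = 1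

/-- The image fan `g · N`. -/
def fanMap (d : ℕ) (g : Ed d ≃ₗᵢ[ℝ] Ed d) (N : Set (Set (Ed d))) : Set (Set (Ed d)) :=
  (fun C => g '' C) '' N

/-- `H` is a linear hyperplane of the subspace `L`. -/
def IsHyperplaneOf (d : ℕ) (H L : Submodule ℝ (Ed d)) : Prop :=
  H ≤ L ∧ Module.finrank ℝ H + 1 = Module.finrank ℝ L

/-- (The data of) a hyperplane arrangement: an ambient subspace together with a finite
set of subspaces (intended: hyperplanes of the ambient space). -/
structure Arrangement (d : ℕ) where
  space : Submodule ℝ (Ed d)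
  hyps : Finset (Submodule ℝ (Ed d))

variable {d : ℕ}

/-- The data are an actual arrangement: each member is a hyperplane of the ambient
subspace. -/
def Arrangement.IsArrangement (A : Arrangement d) : Prop :=
  ∀ H ∈ A.hyps, IsHyperplaneOf d H A.space

/-- A `k`-singleton: an arrangement consisting of a single hyperplane of a
`k`-dimensional subspace. -/
def Arrangement.IsSingletonArr (A : Arrangement d) (k : ℕ) : Prop :=
  A.IsArrangement ∧ A.hyps.card = 1 ∧ Module.finrank ℝ A.space = k

/-- The complement `L \ ∪ A` of an arrangement in its ambient subspace. -/
def arrComplement (A : Arrangement d) : Set (Ed d) :=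
  (A.space : Set (Ed d)) \ ⋃ H ∈ A.hyps, (H : Set (Ed d))

/-- The fan of an arrangement: closures of the connected components of the complement. -/
def arrFan (A : Arrangement d) : Set (Set (Ed d)) :=
  {C | ∃ x ∈ arrComplement A, C = closure (connectedComponentIn (arrComplement A) x)}

/-- Deletion `A ∖ H`. -/
def Arrangement.delete (A : Arrangement d) (H : Submodule ℝ (Ed d)) : Arrangement d :=
  letI := Classical.decEq (Submodule ℝ (Ed d))
  ⟨A.space, A.hyps.erase H⟩

/-- Restriction `A / H`. -/
def Arrangement.restrict (A : Arrangement d) (H : Submodule ℝ (Ed d)) : Arrangement d :=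
  letI := Classical.decEq (Submodule ℝ (Ed d))
  ⟨H, (A.hyps.erase H).image (fun H' => H' ⊓ H)⟩

open Polynomial in
/-- The recursive definition of the unsigned characteristic polynomial:
`χ̄_A(t) = t^k + t^(k-1)` for a `k`-singleton, and
`χ̄_A = χ̄_{A∖H} + χ̄_{A/H}` for `H ∈ A` otherwise.  Its coefficients are the unsigned
Whitney numbers of the first kind. -/
inductive IsCharPoly (d : ℕ) : Arrangement d → Polynomial ℤ → Prop
  | singleton (A : Arrangement d) (k : ℕ) (hk : 1 ≤ k) (hA : A.IsSingletonArr k) :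
      IsCharPoly d A (X ^ k + X ^ (k - 1))
  | deletion_restriction (A : Arrangement d) (H : Submodule ℝ (Ed d)) (hH : H ∈ A.hyps)
      (hcard : 1 < A.hyps.card) (p q : Polynomial ℤ)
      (hp : IsCharPoly d (A.delete H) p) (hq : IsCharPoly d (A.restrict H) q) :
      IsCharPoly d A (p + q)

open Classical in
/-- The metric projection (nearest-point map) of a set `C ⊆ ℝ^d`: the unique nearest
point when it exists (as it does for nonempty closed convex sets). -/
def metricProj (d : ℕ) (C : Set (Ed d)) (x : Ed d) : Ed d :=
  if h : ∃! y, y ∈ C ∧ ∀ z ∈ C, dist x y ≤ dist x z then h.choose else 0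

/-- The normal cone `N_F C` of `C` at a face `F`. -/
def normalCone (d : ℕ) (C F : Set (Ed d)) : Set (Ed d) :=
  {c | ∀ x ∈ C, ∀ y ∈ F, ⟪c, x⟫ ≤ ⟪c, y⟫}

/-- `Π_k(C)`: points `x` whose nearest point of `C` lies in the relative interior of a
`k`-dimensional face of `C`. -/
def Pik (d : ℕ) (C : Set (Ed d)) (k : ℕ) : Set (Ed d) :=
  {x | ∃ F, IsFaceOf d C F ∧ metricProj d C x ∈ intrinsicInterior ℝ F ∧ setDim d F = k}

/-- The `k`-th spherical intrinsic volume of a cone. -/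
def sphIntrinsicVol (d : ℕ) (C : Set (Ed d)) (k : ℕ) : ℝ :=
  (volume (Pik d C k ∩ Metric.closedBall (0 : Ed d) 1)).toReal /
    (volume (Metric.closedBall (0 : Ed d) 1)).toReal

/-- The `k`-th spherical intrinsic volume of a fan. -/
def fanIntrinsicVol (d : ℕ) (N : Set (Set (Ed d))) (k : ℕ) : ℝ :=
  ∑ᶠ C ∈ N, sphIntrinsicVol d C k

/-- The indicator-valued spherical intrinsic volume
`V_k(C) = Σ_F [Π_F(C)]`, the sum over all `k`-dimensional faces `F` of `C` of the
indicator functions of `Π_F(C) = π_C⁻¹(F)`. -/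
def Vk (d : ℕ) (C : Set (Ed d)) (k : ℕ) (x : Ed d) : ℤ :=
  ∑ᶠ F ∈ {F | IsFaceOf d C F ∧ setDim d F = k},
    Set.indicator (metricProj d C ⁻¹' F) (fun _ => (1 : ℤ)) x

/-- The polar cone `C^∨`. -/
def polarCone (d : ℕ) (C : Set (Ed d)) : Set (Ed d) :=
  {c | ∀ x ∈ C, ⟪c, x⟫ ≤ 0}

/-- The lattice of flats of an arrangement: all intersections of subfamilies (the empty
intersection being the ambient space). -/
def flats (A : Arrangement d) : Set (Submodule ℝ (Ed d)) :=
  {L | ∃ S : Finset (Submodule ℝ (Ed d)), S ⊆ A.hyps ∧ L = A.space ⊓ S.inf id}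

/-- `μ` is the Möbius function of the lattice of flats of `A`, ordered by *reverse*
inclusion: `μ(L,L) = 1` and `μ(L,M) = - Σ_{L ≼ Z ≺ M} μ(L,Z)` for `M ⊊ L`. -/
def IsMobiusOf (A : Arrangement d)
    (μ : Submodule ℝ (Ed d) → Submodule ℝ (Ed d) → ℤ) : Prop :=
  (∀ L ∈ flats A, μ L L = 1) ∧
    ∀ L ∈ flats A, ∀ M ∈ flats A, M < L →
      μ L M = -∑ᶠ Z ∈ {Z | Z ∈ flats A ∧ Z ≤ L ∧ M < Z}, μ L Z

/-- A polyhedron: a nonempty finite intersection of closed affine halfspaces. -/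
def IsPolyhedron (d : ℕ) (Q : Set (Ed d)) : Prop :=
  Q.Nonempty ∧ ∃ s : Finset (Ed d × ℝ), Q = {x | ∀ p ∈ s, ⟪p.1, x⟫ ≤ p.2}

/-- A nonempty face of a polyhedron `Q`. -/
def IsFaceOfPolyhedron (d : ℕ) (Q F : Set (Ed d)) : Prop :=
  F.Nonempty ∧ ∃ (c : Ed d) (α : ℝ), (∀ x ∈ Q, ⟪c, x⟫ ≤ α) ∧
    F = {x ∈ Q | ⟪c, x⟫ = α}

/-- Dimension of a subset of `ℝ^d` as dimension of its affine hull. -/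
def polyDim (d : ℕ) (S : Set (Ed d)) : ℕ :=
  Module.finrank ℝ (vectorSpan ℝ S)

/-- The Euler characteristic `ε(Q) = Σ_F (-1)^(dim F)` of a polyhedron. -/
def eulerChar (d : ℕ) (Q : Set (Ed d)) : ℤ :=
  ∑ᶠ F ∈ {F | IsFaceOfPolyhedron d Q F}, (-1 : ℤ) ^ polyDim d F

end

section FanProof

variable {d : ℕ}

lemma polyCone_zero_mem {C : Set (Ed d)} (h : IsPolyCone d C) : (0 : Ed d) ∈ C := by
  obtain ⟨s, rfl⟩ := h
  intro c hc
  simp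

lemma polyCone_convex {C : Set (Ed d)} (h : IsPolyCone d C) : Convex ℝ C := by
  obtain ⟨s, rfl⟩ := h
  intro x hx y hy a b ha hb hab
  intro c hc
  have h1 := hx c hc
  have h2 := hy c hc
  have : ⟪c, a • x + b • y⟫ = a * ⟪c, x⟫ + b * ⟪c, y⟫ := by
    rw [inner_add_right, real_inner_smul_right, real_inner_smul_right]
  rw [this]
  nlinarith

lemma polyCone_smul_mem {C : Set (Ed d)} (h : IsPolyCone d C) {x : Ed d} (hx : x ∈ C)
    {t : ℝ} (ht : 0 ≤ t) : t • x ∈ C := by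
  obtain ⟨s, rfl⟩ := h
  intro c hc
  have h1 := hx c hc
  rw [real_inner_smul_right]
  exact mul_nonpos_of_nonneg_of_nonpos ht h1

/-- Concrete characterization of the intrinsic interior of a set containing `0`. -/
lemma mem_relint {C : Set (Ed d)} (h0 : (0 : Ed d) ∈ C) {p : Ed d} :
    p ∈ intrinsicInterior ℝ C ↔
      p ∈ Submodule.span ℝ C ∧
        ∃ ε > 0, ∀ y ∈ Submodule.span ℝ C, dist y p < ε → y ∈ C := by
  have hcar : (affineSpan ℝ C : Set (Ed d)) = (Submodule.span ℝ C : Set (Ed d)) := by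
    rw [← affineSpan_insert_zero, Set.insert_eq_of_mem h0]
  have hmem : ∀ x : Ed d, x ∈ affineSpan ℝ C ↔ x ∈ Submodule.span ℝ C := by
    intro x
    constructor
    · intro hx; exact (Set.ext_iff.mp hcar x).mp hx
    · intro hx; exact (Set.ext_iff.mp hcar x).mpr hx
  constructor
  · rintro ⟨q, hq, rfl⟩
    rw [mem_interior_iff_mem_nhds, Metric.mem_nhds_iff] at hq
    obtain ⟨ε, hε, hball⟩ := hq
    refine ⟨(hmem _).mp q.2, ε, hε, fun y hy hdy => ?_⟩
    have : (⟨y, (hmem y).mpr hy⟩ : affineSpan ℝ C) ∈ Metric.ball q ε := by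
      rw [Metric.mem_ball, Subtype.dist_eq]
      exact hdy
    exact hball this
  · rintro ⟨hp, ε, hε, hball⟩
    refine ⟨⟨p, (hmem p).mpr hp⟩, ?_, rfl⟩
    rw [mem_interior_iff_mem_nhds, Metric.mem_nhds_iff]
    refine ⟨ε, hε, fun z hz => ?_⟩
    rw [Metric.mem_ball, Subtype.dist_eq] at hz
    exact hball z ((hmem _).mp z.2) hz

lemma relint_nhds {C : Set (Ed d)} (h0 : (0 : Ed d) ∈ C) {p : Ed d}
    (hp : p ∈ intrinsicInterior ℝ C) :
    ∃ ε > 0, ∀ y ∈ Submodule.span ℝ C, dist y p < ε → y ∈ intrinsicInterior ℝ C := by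
  obtain ⟨hps, ε, hε, hball⟩ := (mem_relint h0).mp hp
  refine ⟨ε / 2, by positivity, fun y hy hdy => ?_⟩
  refine (mem_relint h0).mpr ⟨hy, ε / 2, by positivity, fun z hz hdz => ?_⟩
  refine hball z hz ?_
  calc dist z p ≤ dist z y + dist y p := dist_triangle _ _ _
    _ < ε / 2 + ε / 2 := by linarith
    _ = ε := by ring

lemma relint_add_smul {C : Set (Ed d)} (h0 : (0 : Ed d) ∈ C) {p : Ed d}
    (hp : p ∈ intrinsicInterior ℝ C) {w : Ed d} (hw : w ∈ Submodule.span ℝ C) :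
    ∃ δ > 0, ∀ t : ℝ, |t| ≤ δ → p + t • w ∈ intrinsicInterior ℝ C := by
  obtain ⟨ε, hε, hball⟩ := relint_nhds h0 hp
  have hps : p ∈ Submodule.span ℝ C := ((mem_relint h0).mp hp).1
  refine ⟨ε / (2 * (‖w‖ + 1)), by positivity, fun t ht => ?_⟩
  refine hball _ (Submodule.add_mem _ hps (Submodule.smul_mem _ _ hw)) ?_
  have hnw : (0:ℝ) ≤ ‖w‖ := norm_nonneg w
  have : dist (p + t • w) p = ‖t • w‖ := by
    rw [dist_eq_norm]; congr 1; abel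
  rw [this, norm_smul, Real.norm_eq_abs]
  have h1 : |t| * ‖w‖ ≤ (ε / (2 * (‖w‖ + 1))) * ‖w‖ :=
    mul_le_mul_of_nonneg_right ht hnw
  have h2 : (ε / (2 * (‖w‖ + 1))) * ‖w‖ < ε := by
    rw [div_mul_eq_mul_div, div_lt_iff₀ (by positivity)]
    nlinarith
  linarith

lemma support_eq_zero {C : Set (Ed d)} (h0 : (0 : Ed d) ∈ C) {v p : Ed d}
    (hv : ∀ x ∈ C, ⟪v, x⟫ ≤ 0) (hp : p ∈ intrinsicInterior ℝ C) (hvp : ⟪v, p⟫ = 0) :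
    ∀ w ∈ Submodule.span ℝ C, ⟪v, w⟫ = 0 := by
  intro w hw
  obtain ⟨δ, hδ, hmem⟩ := relint_add_smul h0 hp hw
  have h1 := hv _ (intrinsicInterior_subset (hmem δ (by rw [abs_of_pos hδ])))
  have h2 := hv _ (intrinsicInterior_subset (hmem (-δ) (by rw [abs_neg, abs_of_pos hδ])))
  rw [inner_add_right, real_inner_smul_right, hvp] at h1 h2
  nlinarith

lemma relint_pos {C : Set (Ed d)} (h0 : (0 : Ed d) ∈ C) {c : Ed d} (hc0 : c ≠ 0)
    (hcs : c ∈ Submodule.span ℝ C) (hge : ∀ x ∈ C, 0 ≤ ⟪c, x⟫) :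
    ∀ p ∈ intrinsicInterior ℝ C, 0 < ⟪c, p⟫ := by
  intro p hp
  rcases lt_or_eq_of_le (hge p (intrinsicInterior_subset hp)) with h | h
  · exact h
  have hv : ∀ x ∈ C, ⟪-c, x⟫ ≤ 0 := by
    intro x hx; rw [inner_neg_left]; linarith [hge x hx]
  have := support_eq_zero h0 hv hp (by rw [inner_neg_left, ← h, neg_zero])
  have hcc := this c hcs
  rw [inner_neg_left, neg_eq_zero, real_inner_self_eq_norm_sq] at hcc
  exact absurd (by nlinarith [norm_pos_iff.mpr hc0] : False) id

lemma relint_segment {C : Set (Ed d)} (hconv : Convex ℝ C) (h0 : (0 : Ed d) ∈ C)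
    {a b : Ed d} (ha : a ∈ intrinsicInterior ℝ C) (hb : b ∈ C) {t : ℝ}
    (ht0 : 0 ≤ t) (ht1 : t < 1) : (1 - t) • a + t • b ∈ intrinsicInterior ℝ C := by
  obtain ⟨has, ε, hε, hball⟩ := (mem_relint h0).mp ha
  have hbs : b ∈ Submodule.span ℝ C := Submodule.subset_span hb
  have h1t : (0:ℝ) < 1 - t := by linarith
  set m := (1 - t) • a + t • b with hm
  have hms : m ∈ Submodule.span ℝ C :=
    Submodule.add_mem _ (Submodule.smul_mem _ _ has) (Submodule.smul_mem _ _ hbs)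
  refine (mem_relint h0).mpr ⟨hms, (1 - t) * ε, by positivity, fun y hy hdy => ?_⟩
  set a' := a + (1 - t)⁻¹ • (y - m) with ha'
  have ha's : a' ∈ Submodule.span ℝ C :=
    Submodule.add_mem _ has (Submodule.smul_mem _ _ (Submodule.sub_mem _ hy hms))
  have hda : dist a' a < ε := by
    have : dist a' a = ‖(1 - t)⁻¹ • (y - m)‖ := by rw [dist_eq_norm, ha', add_sub_cancel_left]
    rw [this, norm_smul, Real.norm_eq_abs, abs_of_pos (by positivity)]
    rw [dist_eq_norm] at hdy
    rw [inv_mul_lt_iff₀ h1t]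
    linarith [hdy]
  have ha'C : a' ∈ C := hball a' ha's hda
  have hy' : y = (1 - t) • a' + t • b := by
    rw [ha', smul_add, smul_smul, mul_inv_cancel₀ (ne_of_gt h1t), one_smul, hm]
    abel
  rw [hy']
  exact hconv ha'C hb (le_of_lt h1t) ht0 (by ring)

/-- Distinct cones of a fan have disjoint relative interior / cone pairs. -/
lemma relint_disjoint {N : Set (Set (Ed d))} (hN : IsFan d N) {C C' : Set (Ed d)}
    (hC : C ∈ N) (hC' : C' ∈ N) (hne : C ≠ C') {p : Ed d}
    (hp : p ∈ intrinsicInterior ℝ C) (hp' : p ∈ C') : False := by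
  obtain ⟨hfin, hpoly, hface, hspan⟩ := hN
  obtain ⟨v, hv, hFv⟩ := (hface C hC C' hC').1
  have h0 : (0 : Ed d) ∈ C := polyCone_zero_mem (hpoly C hC)
  have hpC : p ∈ C := intrinsicInterior_subset hp
  have hvp : ⟪v, p⟫ = 0 := by
    have hmem : p ∈ C ∩ C' := ⟨hpC, hp'⟩
    rw [hFv] at hmem
    exact hmem.2
  have hz := support_eq_zero h0 hv hp hvp
  have hsub : C ⊆ C' := by
    intro x hx
    have : x ∈ C ∩ C' := by
      rw [hFv]; exact ⟨hx, hz x (Submodule.subset_span hx)⟩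
    exact this.2
  obtain ⟨v', hv', hFv'⟩ := (hface C hC C' hC').2
  have hCz : ∀ x ∈ C, ⟪v', x⟫ = 0 := by
    intro x hx
    have : x ∈ C ∩ C' := ⟨hx, hsub hx⟩
    rw [hFv'] at this
    exact this.2
  have hsz : ∀ w ∈ Submodule.span ℝ C, ⟪v', w⟫ = 0 := by
    intro w hw
    induction hw using Submodule.span_induction with
    | mem x hx => exact hCz x hx
    | zero => exact inner_zero_right v'
    | add x y _ _ hx hy => rw [inner_add_right, hx, hy, add_zero]
    | smul t x _ hx => rw [real_inner_smul_right, hx, mul_zero]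
  have hspan' := hspan C hC C' hC'
  have hsub' : C' ⊆ C := by
    intro x hx
    have hxs : x ∈ Submodule.span ℝ C := by
      rw [hspan']; exact Submodule.subset_span hx
    have : x ∈ C ∩ C' := by rw [hFv']; exact ⟨hx, hsz x hxs⟩
    exact this.1
  exact hne (Set.Subset.antisymm hsub hsub')

/-- Separation of two distinct cones of a fan by a linear hyperplane with normal
in the common linear span. -/
lemma fan_separation {N : Set (Set (Ed d))} (hN : IsFan d N) {C₁ C₂ : Set (Ed d)}
    (hC₁ : C₁ ∈ N) (hC₂ : C₂ ∈ N) (hne : C₁ ≠ C₂) :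
    ∃ c : Ed d, c ≠ 0 ∧ c ∈ Submodule.span ℝ C₁ ∧
      (∀ x ∈ C₁, ⟪c, x⟫ ≤ 0) ∧ (∀ x ∈ C₂, 0 ≤ ⟪c, x⟫) := by
  obtain ⟨hfin, hpoly, hface, hspan⟩ := id hN
  set L := Submodule.span ℝ C₁ with hL
  have h0₁ : (0 : Ed d) ∈ C₁ := polyCone_zero_mem (hpoly C₁ hC₁)
  have h0₂ : (0 : Ed d) ∈ C₂ := polyCone_zero_mem (hpoly C₂ hC₂)
  have hconv₁ := polyCone_convex (hpoly C₁ hC₁)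
  have hconv₂ := polyCone_convex (hpoly C₂ hC₂)
  have hC₂L : C₂ ⊆ (L : Set (Ed d)) := by
    intro x hx
    have : x ∈ Submodule.span ℝ C₂ := Submodule.subset_span hx
    rwa [← hspan C₁ hC₁ C₂ hC₂] at this
  -- the open "cylinder" over the relative interior of C₁
  set pr : Ed d →ₗ[ℝ] Ed d := L.subtype ∘ₗ (L.orthogonalProjectionOnto).toLinearMap with hpr
  set s : Set (Ed d) := pr ⁻¹' (intrinsicInterior ℝ C₁) with hs
  have hprL : ∀ x : Ed d, x ∈ L → pr x = x := by
    intro x hx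
    simp only [hpr, LinearMap.comp_apply, Submodule.coe_subtype,
      ContinuousLinearMap.coe_coe]
    exact (Submodule.starProjection_eq_self_iff (K := L)).mpr hx
  have hprnorm : ∀ x : Ed d, ‖pr x‖ ≤ ‖x‖ := by
    intro x
    simp only [hpr, LinearMap.comp_apply, Submodule.coe_subtype,
      ContinuousLinearMap.coe_coe]
    have := (L.orthogonalProjectionOnto).le_of_opNorm_le (Submodule.orthogonalProjectionOnto_norm_le L) x
    simpa using this
  have hprmem : ∀ x : Ed d, pr x ∈ L := by
    intro x
    simp only [hpr, LinearMap.comp_apply, Submodule.coe_subtype,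
      ContinuousLinearMap.coe_coe]
    exact SetLike.coe_mem _
  have hopen : IsOpen s := by
    rw [Metric.isOpen_iff]
    intro x hx
    obtain ⟨ε, hε, hball⟩ := relint_nhds h0₁ (hx : pr x ∈ intrinsicInterior ℝ C₁)
    refine ⟨ε, hε, fun y hy => ?_⟩
    have hdy : dist (pr y) (pr x) < ε := by
      rw [dist_eq_norm, ← map_sub]
      calc ‖pr (y - x)‖ ≤ ‖y - x‖ := hprnorm _
        _ < ε := by rwa [← dist_eq_norm]
    exact hball (pr y) (hprmem y) hdy
  have hrelconv : Convex ℝ (intrinsicInterior ℝ C₁) := by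
    intro x hx y hy a b ha hb hab
    have hb1 : b ≤ 1 := by linarith
    rcases eq_or_lt_of_le hb1 with hbe | hbl
    · have ha0 : a = 0 := by linarith
      rw [ha0, hbe, zero_smul, one_smul, zero_add]
      exact hy
    · have ha' : a = 1 - b := by linarith
      rw [ha']
      exact relint_segment hconv₁ h0₁ hx (intrinsicInterior_subset hy) hb hbl
  have hconvs : Convex ℝ s := hrelconv.linear_preimage pr
  have hdisj : Disjoint s C₂ := by
    rw [Set.disjoint_left]
    intro x hx hxC₂
    have hxL : x ∈ L := hC₂L hxC₂
    have : x ∈ intrinsicInterior ℝ C₁ := by rwa [hs, Set.mem_preimage, hprL x hxL] at hx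
    exact relint_disjoint hN hC₁ hC₂ hne this hxC₂
  obtain ⟨f, u, hfs, hft⟩ := geometric_hahn_banach_open hconvs hopen hconv₂ hdisj
  obtain ⟨p₀, hp₀⟩ := Set.Nonempty.intrinsicInterior hconv₁ ⟨0, h0₁⟩
  have hC₁L : C₁ ⊆ (L : Set (Ed d)) := fun x hx => Submodule.subset_span hx
  have hp₀L : p₀ ∈ L := hC₁L (intrinsicInterior_subset hp₀)
  have hstepA : ∀ a ∈ intrinsicInterior ℝ C₁, f a < u := by
    intro a ha
    have haL : a ∈ L := hC₁L (intrinsicInterior_subset ha)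
    have : a ∈ s := by rw [hs, Set.mem_preimage, hprL a haL]; exact ha
    exact hfs a this
  have hstepB : ∀ x ∈ C₁, f x ≤ u := by
    intro x hx
    have hkey : (1 - (1:ℝ)) • p₀ + (1:ℝ) • x = x := by simp
    have hcont : Filter.Tendsto (fun t : ℝ => f ((1 - t) • p₀ + t • x))
        (nhdsWithin 1 (Set.Iio 1)) (nhds (f x)) := by
      have h1 : Continuous fun t : ℝ => (1 - t) • p₀ + t • x :=
        ((continuous_const.sub continuous_id).smul continuous_const).add
          (continuous_id.smul continuous_const)
      have h2 := (f.continuous.comp h1).tendsto 1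
      rw [Function.comp] at h2
      simp only [hkey] at h2
      exact h2.mono_left nhdsWithin_le_nhds
    have hev : ∀ᶠ t in nhdsWithin (1:ℝ) (Set.Iio 1),
        f ((1 - t) • p₀ + t • x) ≤ u := by
      filter_upwards [Ioo_mem_nhdsLT_of_mem (Set.mem_Ioc.mpr ⟨zero_lt_one, le_refl (1:ℝ)⟩)]
        with t ht
      exact le_of_lt (hstepA _ (relint_segment hconv₁ h0₁ hp₀ hx (le_of_lt ht.1) ht.2))
    exact le_of_tendsto hcont hev
  have hstepC : ∀ x ∈ C₁, f x ≤ 0 := by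
    intro x hx
    by_contra hpos
    push_neg at hpos
    set t := (|u| + 1) / f x with htdef
    have ht : 0 < t := by positivity
    have := hstepB (t • x) (polyCone_smul_mem (hpoly C₁ hC₁) hx (le_of_lt ht))
    rw [f.map_smul, smul_eq_mul, htdef, div_mul_cancel₀ _ (ne_of_gt hpos)] at this
    linarith [le_abs_self u]
  have hstepD : u ≤ 0 := by
    have := hft 0 h0₂
    rwa [map_zero] at this
  have hstepE : ∀ x ∈ C₂, 0 ≤ f x := by
    intro x hx
    by_contra hneg
    push_neg at hneg
    set t := (|u| + 1) / (-f x) with htdef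
    have ht : 0 < t := div_pos (by positivity) (by linarith)
    have hle := hft (t • x) (polyCone_smul_mem (hpoly C₂ hC₂) hx (le_of_lt ht))
    have h3 : f (t • x) = t * f x := by rw [f.map_smul, smul_eq_mul]
    have h4 : t * f x = -(|u| + 1) := by
      rw [htdef, div_mul_eq_mul_div, div_neg, mul_div_assoc,
        div_self (ne_of_lt hneg), mul_one]
    rw [h3, h4] at hle
    linarith [neg_abs_le u]
  set c₀ := (InnerProductSpace.toDual ℝ (Ed d)).symm f with hc₀
  have hc₀x : ∀ x : Ed d, ⟪c₀, x⟫ = f x := fun x => InnerProductSpace.toDual_symm_apply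
  set c : Ed d := (L.orthogonalProjectionOnto c₀ : Ed d) with hc
  have hcL : c ∈ L := SetLike.coe_mem _
  have hcx : ∀ x ∈ L, ⟪c, x⟫ = f x := by
    intro x hx
    have hperp : c₀ - c ∈ Lᗮ := Submodule.sub_starProjection_mem_orthogonal (K := L) c₀
    have h1 : ⟪x, c₀ - c⟫ = 0 := (Submodule.mem_orthogonal L (c₀ - c)).mp hperp x hx
    have h2 : ⟪c₀ - c, x⟫ = 0 := by rw [real_inner_comm]; exact h1
    rw [inner_sub_left] at h2
    have : ⟪c, x⟫ = ⟪c₀, x⟫ := by linarith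
    rw [this, hc₀x]
  have hc0 : c ≠ 0 := by
    intro hzero
    have h1 : f p₀ < u := hstepA p₀ hp₀
    have h2 : ⟪c, p₀⟫ = f p₀ := hcx p₀ hp₀L
    rw [hzero, inner_zero_left] at h2
    linarith
  refine ⟨c, hc0, hcL, ?_, ?_⟩
  · intro x hx
    rw [hcx x (hC₁L hx)]
    exact hstepC x hx
  · intro x hx
    rw [hcx x (hC₂L hx)]
    exact hstepE x hx


lemma polyCone_inter_le {C : Set (Ed d)} (h : IsPolyCone d C) (c : Ed d) :
    IsPolyCone d (C ∩ {x | ⟪c, x⟫ ≤ 0}) := by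
  obtain ⟨s, rfl⟩ := h
  classical
  refine ⟨insert c s, ?_⟩
  ext x
  simp only [Set.mem_inter_iff, Set.mem_setOf_eq, Finset.mem_insert]
  constructor
  · rintro ⟨h1, h2⟩ b hb
    rcases hb with rfl | hb
    · exact h2
    · exact h1 b hb
  · intro h
    exact ⟨fun b hb => h b (Or.inr hb), h c (Or.inl rfl)⟩

lemma polyCone_inter_ge {C : Set (Ed d)} (h : IsPolyCone d C) (c : Ed d) :
    IsPolyCone d (C ∩ {x | 0 ≤ ⟪c, x⟫}) := by
  have hset : {x : Ed d | 0 ≤ ⟪c, x⟫} = {x | ⟪-c, x⟫ ≤ 0} := by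
    ext x; simp only [Set.mem_setOf_eq, inner_neg_left]; constructor <;> intro <;> linarith
  rw [hset]
  exact polyCone_inter_le h (-c)

lemma polyCone_inter_eq {C : Set (Ed d)} (h : IsPolyCone d C) (c : Ed d) :
    IsPolyCone d (C ∩ {x | ⟪c, x⟫ = 0}) := by
  have hset : (C ∩ {x : Ed d | ⟪c, x⟫ = 0}) =
      (C ∩ {x | ⟪c, x⟫ ≤ 0}) ∩ {x | ⟪-c, x⟫ ≤ 0} := by
    ext x
    simp only [Set.mem_inter_iff, Set.mem_setOf_eq, inner_neg_left]
    constructor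
    · rintro ⟨h1, h2⟩; exact ⟨⟨h1, le_of_eq h2⟩, by rw [h2]; simp⟩
    · rintro ⟨⟨h1, h2⟩, h3⟩; exact ⟨h1, le_antisymm h2 (by linarith)⟩
  rw [hset]
  exact polyCone_inter_le (polyCone_inter_le h c) (-c)

lemma face_inter {C C' S : Set (Ed d)} (h : IsFaceOf d C (C ∩ C')) :
    IsFaceOf d (C ∩ S) ((C ∩ S) ∩ (C' ∩ S)) := by
  obtain ⟨v, hv, hF⟩ := h
  refine ⟨v, fun x hx => hv x hx.1, ?_⟩
  ext x
  simp only [Set.mem_inter_iff, Set.mem_setOf_eq]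
  constructor
  · rintro ⟨⟨h1, h2⟩, h3, _⟩
    have : x ∈ C ∩ C' := ⟨h1, h3⟩
    rw [hF] at this
    exact ⟨⟨h1, h2⟩, this.2⟩
  · rintro ⟨⟨h1, h2⟩, h3⟩
    have : x ∈ C ∩ C' := by rw [hF]; exact ⟨h1, h3⟩
    exact ⟨⟨h1, h2⟩, this.2, h2⟩

/-- Span of the intersection with a halfspace whose relative interior is met. -/
lemma span_inter_le {C : Set (Ed d)} (hC : IsPolyCone d C) {c : Ed d}
    (hcs : c ∈ Submodule.span ℝ C)
    (hne : (intrinsicInterior ℝ C ∩ {x | ⟪c, x⟫ ≤ 0}).Nonempty) :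
    Submodule.span ℝ (C ∩ {x | ⟪c, x⟫ ≤ 0}) = Submodule.span ℝ C := by
  have h0 : (0 : Ed d) ∈ C := polyCone_zero_mem hC
  by_cases hc0 : c = 0
  · have : C ∩ {x : Ed d | ⟪c, x⟫ ≤ 0} = C := by
      apply Set.inter_eq_self_of_subset_left
      intro x _
      rw [hc0]
      simp [inner_zero_left]
    rw [this]
  -- find a relative interior point strictly inside the halfspace
  obtain ⟨p, hpr, hple⟩ := hne
  have hple' : ⟪c, p⟫ ≤ 0 := hple
  obtain ⟨p', hp'r, hp'lt⟩ : ∃ p', p' ∈ intrinsicInterior ℝ C ∧ ⟪c, p'⟫ < 0 := by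
    rcases lt_or_eq_of_le hple' with h | h
    · exact ⟨p, hpr, h⟩
    · obtain ⟨δ, hδ, hmem⟩ := relint_add_smul h0 hpr hcs
      refine ⟨p + (-δ) • c, hmem (-δ) (by rw [abs_neg, abs_of_pos hδ]), ?_⟩
      rw [inner_add_right, real_inner_smul_right, h, zero_add]
      have h3 : (0:ℝ) < ⟪c, c⟫ := by
        rw [real_inner_self_eq_norm_sq]
        have := norm_pos_iff.mpr hc0
        nlinarith
      exact mul_neg_of_neg_of_pos (by linarith) h3
  apply le_antisymm
  · exact Submodule.span_mono Set.inter_subset_left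
  · rw [Submodule.span_le]
    intro x hx
    -- x ∈ C; show x ∈ span (C ∩ halfspace)
    have hxs : x ∈ Submodule.span ℝ C := Submodule.subset_span hx
    -- generic claim for all w in span C
    suffices hgen : ∀ w ∈ Submodule.span ℝ C, w ∈ Submodule.span ℝ (C ∩ {x | ⟪c, x⟫ ≤ 0}) by
      exact hgen x hxs
    intro w hw
    obtain ⟨δ, hδ, hmem⟩ := relint_add_smul h0 hp'r hw
    set t := min δ ((-⟪c, p'⟫) / (|⟪c, w⟫| + 1)) with htdef
    have ht : 0 < t := lt_min hδ (div_pos (by linarith) (by positivity))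
    have htδ : t ≤ δ := min_le_left _ _
    have htb : t * (|⟪c, w⟫| + 1) ≤ -⟪c, p'⟫ := by
      rw [← le_div_iff₀ (by positivity)]
      exact min_le_right _ _
    have hinner : ∀ s : ℝ, |s| ≤ t → ⟪c, p' + s • w⟫ ≤ 0 := by
      intro s hs
      rw [inner_add_right, real_inner_smul_right]
      have h1 : s * ⟪c, w⟫ ≤ |s| * |⟪c, w⟫| := by
        calc s * ⟪c, w⟫ ≤ |s * ⟪c, w⟫| := le_abs_self _
          _ = |s| * |⟪c, w⟫| := abs_mul _ _
      have h2 : |s| * |⟪c, w⟫| ≤ t * (|⟪c, w⟫| + 1) := by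
        have := abs_nonneg (⟪c, w⟫)
        nlinarith [abs_nonneg s]
      linarith
    have hp1 : p' + t • w ∈ C ∩ {x | ⟪c, x⟫ ≤ 0} :=
      ⟨intrinsicInterior_subset (hmem t (by rw [abs_of_pos ht]; exact htδ)),
        hinner t (by rw [abs_of_pos ht])⟩
    have hp2 : p' + (-t) • w ∈ C ∩ {x | ⟪c, x⟫ ≤ 0} :=
      ⟨intrinsicInterior_subset (hmem (-t) (by rw [abs_neg, abs_of_pos ht]; exact htδ)),
        hinner (-t) (by rw [abs_neg, abs_of_pos ht])⟩
    have hw' : w = (2 * t)⁻¹ • ((p' + t • w) - (p' + (-t) • w)) := by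
      have h2t : (2 * t) ≠ 0 := by positivity
      rw [show (p' + t • w) - (p' + (-t) • w) = (2 * t) • w by
        rw [neg_smul]; rw [two_mul, add_smul]; abel]
      rw [smul_smul, inv_mul_cancel₀ h2t, one_smul]
    rw [hw']
    exact Submodule.smul_mem _ _ (Submodule.sub_mem _
      (Submodule.subset_span hp1) (Submodule.subset_span hp2))

lemma span_inter_ge {C : Set (Ed d)} (hC : IsPolyCone d C) {c : Ed d}
    (hcs : c ∈ Submodule.span ℝ C)
    (hne : (intrinsicInterior ℝ C ∩ {x | 0 ≤ ⟪c, x⟫}).Nonempty) :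
    Submodule.span ℝ (C ∩ {x | 0 ≤ ⟪c, x⟫}) = Submodule.span ℝ C := by
  have hset : {x : Ed d | 0 ≤ ⟪c, x⟫} = {x | ⟪-c, x⟫ ≤ 0} := by
    ext x; simp only [Set.mem_setOf_eq, inner_neg_left]; constructor <;> intro <;> linarith
  rw [hset] at hne ⊢
  exact span_inter_le hC (Submodule.neg_mem _ hcs) hne

lemma span_inter_eq {C : Set (Ed d)} (hC : IsPolyCone d C) {c : Ed d}
    (hcs : c ∈ Submodule.span ℝ C)
    (hne : (intrinsicInterior ℝ C ∩ {x | ⟪c, x⟫ = 0}).Nonempty) :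
    (Submodule.span ℝ (C ∩ {x | ⟪c, x⟫ = 0}) : Set (Ed d)) =
      {w | w ∈ Submodule.span ℝ C ∧ ⟪c, w⟫ = 0} := by
  have h0 : (0 : Ed d) ∈ C := polyCone_zero_mem hC
  obtain ⟨p, hpr, hpe⟩ := hne
  have hpe' : ⟪c, p⟫ = 0 := hpe
  have hker : ∀ y, y ∈ Submodule.span ℝ (C ∩ {x | ⟪c, x⟫ = 0}) → ⟪c, y⟫ = 0 := by
    intro y hy
    induction hy using Submodule.span_induction with
    | mem x hx => exact hx.2
    | zero => exact inner_zero_right c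
    | add x y _ _ hx hy => rw [inner_add_right, hx, hy, add_zero]
    | smul t x _ hx => rw [real_inner_smul_right, hx, mul_zero]
  apply Set.Subset.antisymm
  · intro w hw
    have hw' : w ∈ Submodule.span ℝ (C ∩ {x | ⟪c, x⟫ = 0}) := hw
    exact ⟨Submodule.span_mono Set.inter_subset_left hw', hker w hw'⟩
  · rintro w ⟨hws, hwe⟩
    obtain ⟨δ, hδ, hmem⟩ := relint_add_smul h0 hpr hws
    have hp1 : p + δ • w ∈ C ∩ {x | ⟪c, x⟫ = 0} :=
      ⟨intrinsicInterior_subset (hmem δ (by rw [abs_of_pos hδ])),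
        by rw [Set.mem_setOf_eq, inner_add_right, real_inner_smul_right, hpe', hwe]; ring⟩
    have hp2 : p + (-δ) • w ∈ C ∩ {x | ⟪c, x⟫ = 0} :=
      ⟨intrinsicInterior_subset (hmem (-δ) (by rw [abs_neg, abs_of_pos hδ])),
        by rw [Set.mem_setOf_eq, inner_add_right, real_inner_smul_right, hpe', hwe]; ring⟩
    have hw' : w = (2 * δ)⁻¹ • ((p + δ • w) - (p + (-δ) • w)) := by
      have h2δ : (2 * δ) ≠ 0 := by positivity
      rw [show (p + δ • w) - (p + (-δ) • w) = (2 * δ) • w by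
        rw [neg_smul]; rw [two_mul, add_smul]; abel]
      rw [smul_smul, inv_mul_cancel₀ h2δ, one_smul]
    rw [hw']
    exact Submodule.smul_mem _ _ (Submodule.sub_mem _
      (Submodule.subset_span hp1) (Submodule.subset_span hp2))

lemma isFan_fanInter_aux {N : Set (Set (Ed d))} (hN : IsFan d N) (S : Set (Ed d))
    (hpoly' : ∀ C ∈ N, IsPolyCone d (C ∩ S))
    (hspan' : ∀ C ∈ N, ∀ C' ∈ N, (intrinsicInterior ℝ C ∩ S).Nonempty →
      (intrinsicInterior ℝ C' ∩ S).Nonempty →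
        Submodule.span ℝ (C ∩ S) = Submodule.span ℝ (C' ∩ S)) :
    IsFan d (fanInter d N S) := by
  obtain ⟨hfin, hpoly, hface, hspan⟩ := id hN
  refine ⟨?_, ?_, ?_, ?_⟩
  · apply Set.Finite.subset (hfin.image (fun C => C ∩ S))
    rintro D ⟨C, hC, _, rfl⟩
    exact Set.mem_image_of_mem _ hC
  · rintro D ⟨C, hC, _, rfl⟩
    exact hpoly' C hC
  · rintro D ⟨C, hC, _, rfl⟩ D' ⟨C', hC', _, rfl⟩
    exact ⟨face_inter (hface C hC C' hC').1,
      by rw [Set.inter_comm (C ∩ S)]; exact face_inter (hface C' hC' C hC).1⟩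
  · rintro D ⟨C, hC, hCne, rfl⟩ D' ⟨C', hC', hC'ne, rfl⟩
    exact hspan' C hC C' hC' hCne hC'ne

lemma isFan_fanInter_le {N : Set (Set (Ed d))} (hN : IsFan d N) {c : Ed d}
    (hcs : ∀ C ∈ N, c ∈ Submodule.span ℝ C) :
    IsFan d (fanInter d N {x | ⟪c, x⟫ ≤ 0}) := by
  refine isFan_fanInter_aux hN _ (fun C hC => polyCone_inter_le (hN.2.1 C hC) c) ?_
  intro C hC C' hC' h1 h2
  rw [span_inter_le (hN.2.1 C hC) (hcs C hC) h1,
    span_inter_le (hN.2.1 C' hC') (hcs C' hC') h2]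
  exact hN.2.2.2 C hC C' hC'

lemma isFan_fanInter_ge {N : Set (Set (Ed d))} (hN : IsFan d N) {c : Ed d}
    (hcs : ∀ C ∈ N, c ∈ Submodule.span ℝ C) :
    IsFan d (fanInter d N {x | 0 ≤ ⟪c, x⟫}) := by
  refine isFan_fanInter_aux hN _ (fun C hC => polyCone_inter_ge (hN.2.1 C hC) c) ?_
  intro C hC C' hC' h1 h2
  rw [span_inter_ge (hN.2.1 C hC) (hcs C hC) h1,
    span_inter_ge (hN.2.1 C' hC') (hcs C' hC') h2]
  exact hN.2.2.2 C hC C' hC'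

lemma isFan_fanInter_eq {N : Set (Set (Ed d))} (hN : IsFan d N) {c : Ed d}
    (hcs : ∀ C ∈ N, c ∈ Submodule.span ℝ C) :
    IsFan d (fanInter d N {x | ⟪c, x⟫ = 0}) := by
  refine isFan_fanInter_aux hN _ (fun C hC => polyCone_inter_eq (hN.2.1 C hC) c) ?_
  intro C hC C' hC' h1 h2
  apply SetLike.coe_injective
  rw [span_inter_eq (hN.2.1 C hC) (hcs C hC) h1,
    span_inter_eq (hN.2.1 C' hC') (hcs C' hC') h2,
    hN.2.2.2 C hC C' hC']

lemma isFan_singleton {N : Set (Set (Ed d))} (hN : IsFan d N) {C : Set (Ed d)}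
    (hC : C ∈ N) : IsFan d {C} := by
  refine ⟨Set.finite_singleton C, ?_, ?_, ?_⟩
  · intro D hD
    rw [Set.mem_singleton_iff] at hD
    rw [hD]
    exact hN.2.1 C hC
  · intro D hD D' hD'
    rw [Set.mem_singleton_iff] at hD hD'
    rw [hD, hD']
    exact hN.2.2.1 C hC C hC
  · intro D hD D' hD'
    rw [Set.mem_singleton_iff] at hD hD'
    rw [hD, hD']

lemma fanInter_singleton_pos {C : Set (Ed d)} {S : Set (Ed d)}
    (h : (intrinsicInterior ℝ C ∩ S).Nonempty) :
    fanInter d {C} S = {C ∩ S} := by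
  ext D
  constructor
  · rintro ⟨C', hC', _, rfl⟩
    rw [Set.mem_singleton_iff] at hC'
    rw [hC']
    rfl
  · rintro rfl
    exact ⟨C, rfl, h, rfl⟩

lemma fanInter_singleton_neg {C : Set (Ed d)} {S : Set (Ed d)}
    (h : ¬ (intrinsicInterior ℝ C ∩ S).Nonempty) :
    fanInter d {C} S = ∅ := by
  ext D
  simp only [Set.mem_empty_iff_false, iff_false]
  rintro ⟨C', hC', hne, rfl⟩
  rw [Set.mem_singleton_iff] at hC'
  rw [hC'] at hne
  exact h hne

lemma fanInter_sum_step {G : Type*} [AddCommGroup G] (φ : Set (Set (Ed d)) → G)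
    (hval : IsFanValuation d φ) {n : ℕ}
    (IH : ∀ N' : Set (Set (Ed d)), ∀ F' : Finset (Set (Ed d)), N' = ↑F' → F'.card ≤ n →
      IsFan d N' → φ N' = ∑ᶠ C ∈ N', φ {C})
    {N : Set (Set (Ed d))} (hN : IsFan d N) {F : Finset (Set (Ed d))} (hNF : N = ↑F)
    (hFcard : F.card ≤ n + 1) (S : Set (Ed d)) (hfanS : IsFan d (fanInter d N S))
    {C₀ : Set (Ed d)} (hC₀N : C₀ ∈ N) (hC₀ : intrinsicInterior ℝ C₀ ∩ S = ∅) :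
    φ (fanInter d N S) = ∑ C ∈ F, φ (fanInter d {C} S) := by
  classical
  set F' := F.filter (fun C => (intrinsicInterior ℝ C ∩ S).Nonempty) with hF'
  have hset : fanInter d N S = ↑(F'.image (fun C => C ∩ S)) := by
    ext D
    simp only [fanInter, Set.mem_setOf_eq, Finset.coe_image, Set.mem_image,
      Finset.mem_coe, Finset.mem_filter, hF']
    constructor
    · rintro ⟨C, hC, hne, rfl⟩
      exact ⟨C, ⟨by rwa [hNF, Finset.mem_coe] at hC, hne⟩, rfl⟩
    · rintro ⟨C, ⟨hC, hne⟩, rfl⟩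
      exact ⟨C, by rw [hNF]; exact Finset.mem_coe.mpr hC, hne, rfl⟩
  have hC₀F : C₀ ∈ F := by rwa [hNF, Finset.mem_coe] at hC₀N
  have hF'sub : F' ⊆ F.erase C₀ := by
    intro C hC
    rw [hF', Finset.mem_filter] at hC
    refine Finset.mem_erase.mpr ⟨?_, hC.1⟩
    intro h
    rw [h] at hC
    rw [hC₀] at hC
    exact Set.not_nonempty_empty hC.2
  have hcard' : (F'.image (fun C => C ∩ S)).card ≤ n := by
    calc (F'.image (fun C => C ∩ S)).card ≤ F'.card := Finset.card_image_le
      _ ≤ (F.erase C₀).card := Finset.card_le_card hF'sub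
      _ = F.card - 1 := Finset.card_erase_of_mem hC₀F
      _ ≤ n := by omega
  have hinj : ∀ C ∈ F', ∀ C' ∈ F', C ∩ S = C' ∩ S → C = C' := by
    intro C hC C' hC' heq
    rw [hF', Finset.mem_filter] at hC hC'
    by_contra hne
    obtain ⟨p, hp1, hp2⟩ := hC.2
    have hpC' : p ∈ C' := by
      have : p ∈ C ∩ S := ⟨intrinsicInterior_subset hp1, hp2⟩
      rw [heq] at this
      exact this.1
    exact relint_disjoint hN (by rw [hNF]; exact Finset.mem_coe.mpr hC.1)
      (by rw [hNF]; exact Finset.mem_coe.mpr hC'.1) hne hp1 hpC'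
  rw [IH _ _ hset hcard' hfanS, hset, finsum_mem_coe_finset, Finset.sum_image hinj]
  have hterm : ∀ C ∈ F, φ (fanInter d {C} S) =
      if (intrinsicInterior ℝ C ∩ S).Nonempty then φ {C ∩ S} else 0 := by
    intro C _
    split_ifs with h
    · rw [fanInter_singleton_pos h]
    · rw [fanInter_singleton_neg h, hval.1]
  rw [Finset.sum_congr rfl hterm, ← Finset.sum_filter]

lemma fan_val_aux {G : Type*} [AddCommGroup G] (φ : Set (Set (Ed d)) → G)
    (hval : IsFanValuation d φ) :
    ∀ n : ℕ, ∀ N : Set (Set (Ed d)), ∀ F : Finset (Set (Ed d)), N = ↑F → F.card ≤ n →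
      IsFan d N → φ N = ∑ᶠ C ∈ N, φ {C} := by
  intro n
  induction n with
  | zero =>
    intro N F hNF hcard hN
    have hF : F = ∅ := Finset.card_eq_zero.mp (le_antisymm hcard (Nat.zero_le _))
    rw [hNF, hF, Finset.coe_empty, hval.1, finsum_mem_empty]
  | succ n IH =>
    intro N F hNF hcard hN
    rcases Set.eq_empty_or_nonempty N with hemp | ⟨C₁, hC₁⟩
    · rw [hemp, hval.1, finsum_mem_empty]
    by_cases hsub : N ⊆ {C₁}
    · have hNs : N = {C₁} := Set.Subset.antisymm hsub (Set.singleton_subset_iff.mpr hC₁)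
      rw [hNs, finsum_mem_singleton]
    obtain ⟨C₂, hC₂, hC₂ne⟩ := Set.not_subset.mp hsub
    have hne : C₁ ≠ C₂ := by
      intro h
      exact hC₂ne (by rw [← h] at hC₂ ⊢; exact Set.mem_singleton _)
    obtain ⟨c, hc0, hcL, h₁, h₂⟩ := fan_separation hN hC₁ hC₂ hne
    have hcs : ∀ C ∈ N, c ∈ Submodule.span ℝ C := by
      intro C hC
      rw [hN.2.2.2 C hC C₁ hC₁]
      exact hcL
    have h0₁ : (0 : Ed d) ∈ C₁ := polyCone_zero_mem (hN.2.1 C₁ hC₁)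
    have h0₂ : (0 : Ed d) ∈ C₂ := polyCone_zero_mem (hN.2.1 C₂ hC₂)
    have hex_le : intrinsicInterior ℝ C₂ ∩ {x | ⟪c, x⟫ ≤ 0} = ∅ := by
      apply Set.eq_empty_iff_forall_notMem.mpr
      rintro p ⟨hp1, hp2⟩
      have := relint_pos h0₂ hc0 (hcs C₂ hC₂) h₂ p hp1
      exact absurd (hp2 : ⟪c, p⟫ ≤ 0) (not_le.mpr this)
    have hmc0 : -c ≠ 0 := neg_ne_zero.mpr hc0
    have h₁' : ∀ x ∈ C₁, 0 ≤ ⟪-c, x⟫ := by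
      intro x hx
      rw [inner_neg_left]
      linarith [h₁ x hx]
    have hneg_pos := relint_pos h0₁ hmc0 (Submodule.neg_mem _ (hcs C₁ hC₁)) h₁'
    have hex_ge : intrinsicInterior ℝ C₁ ∩ {x | 0 ≤ ⟪c, x⟫} = ∅ := by
      apply Set.eq_empty_iff_forall_notMem.mpr
      rintro p ⟨hp1, hp2⟩
      have := hneg_pos p hp1
      rw [inner_neg_left] at this
      have h2 : (0:ℝ) ≤ ⟪c, p⟫ := hp2
      linarith
    have hex_eq : intrinsicInterior ℝ C₁ ∩ {x | ⟪c, x⟫ = 0} = ∅ := by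
      apply Set.eq_empty_iff_forall_notMem.mpr
      rintro p ⟨hp1, hp2⟩
      have := hneg_pos p hp1
      rw [inner_neg_left] at this
      have h2 : ⟪c, p⟫ = 0 := hp2
      linarith
    have hvaleq := hval.2 N hN c hc0 hcs
    have hsle := fanInter_sum_step φ hval IH hN hNF hcard _ (isFan_fanInter_le hN hcs)
      hC₂ hex_le
    have hsge := fanInter_sum_step φ hval IH hN hNF hcard _ (isFan_fanInter_ge hN hcs)
      hC₁ hex_ge
    have hseq := fanInter_sum_step φ hval IH hN hNF hcard _ (isFan_fanInter_eq hN hcs)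
      hC₁ hex_eq
    rw [hvaleq, hsle, hsge, hseq, ← Finset.sum_add_distrib, ← Finset.sum_sub_distrib,
      hNF, finsum_mem_coe_finset]
    apply Finset.sum_congr rfl
    intro C hC
    have hCN : C ∈ N := by rw [hNF]; exact Finset.mem_coe.mpr hC
    have hsingle := hval.2 {C} (isFan_singleton hN hCN) c hc0 ?_
    · exact hsingle.symm
    · intro D hD
      rw [Set.mem_singleton_iff] at hD
      rw [hD]
      exact hcs C hCN

end FanProof

/-- A fan valuation is determined by its values on the single-cone
fans: `φ(N) = Σ_{C ∈ N} φ({C})`. -/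
theorem fan_valuation_eq_sum_single_cones
    (d : ℕ) {G : Type*} [AddCommGroup G] (φ : Set (Set (Ed d)) → G)
    (hval : IsFanValuation d φ)
    (N : Set (Set (Ed d))) (hN : IsFan d N) :
    φ N = ∑ᶠ C ∈ N, φ {C} := by
  exact fan_val_aux φ hval hN.1.toFinset.card N hN.1.toFinset
    (hN.1.coe_toFinset).symm (le_refl _) hN
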